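/- Let F be a field with q' elements. Any linear erasure code for G_q over F assigns to each vertex a linear functional on F² such that functionals of adjacent vertices are linearly independent; since there are exactly q'+1 normalized nonzero vectors in F² (one-dimensional subspaces), this yields a proper coloring of G_q with q'+1 colors, hence χ(G_q) ≤ q_lin(G_q)+1. -/

import Mathlib

/-- A vector u ∈ [q]^{q²} is balanced if each symbol of [q] appears exactly q times. -/
def BalancedVec (q : ℕ) (u : Fin (q ^ 2) → Fin q) : Prop :=
  ∀ j : Fin q, (Finset.univ.filter fun i => u i = j).card = q

/-- The graph G_q on the balanced vectors in [q]^{q²}, with u ~ v iff the pairs (u_i, v_i)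
exhaust all of [q]×[q]. -/
def Gq (q : ℕ) : SimpleGraph {u : Fin (q ^ 2) → Fin q // BalancedVec q u} where
  Adj u v := u ≠ v ∧ Function.Surjective (fun i : Fin (q ^ 2) => (u.val i, v.val i))
  symm := by
    constructor
    rintro u v ⟨hne, hs⟩
    refine ⟨hne.symm, fun p => ?_⟩
    obtain ⟨i, hi⟩ := hs (p.2, p.1)
    rw [Prod.ext_iff] at hi
    exact ⟨i, by rw [Prod.ext_iff]; exact ⟨hi.2, hi.1⟩⟩
  loopless := by constructor; rintro u ⟨hne, _⟩; exact hne rfl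

/-- Let F be a field with q' elements.  If a linear erasure code for G_q over F
assigns to each vertex a linear functional on F² (represented by a vector of F²) such that the
functionals of adjacent vertices are linearly independent, then G_q admits a proper coloring
with q'+1 colors (one per normalized vector of F²); hence χ(G_q) ≤ q'+1. -/
theorem stmt12 (q q' : ℕ) (F : Type) [Field F] [Fintype F] (hF : Fintype.card F = q')
    (L : {u : Fin (q ^ 2) → Fin q // BalancedVec q u} → Fin 2 → F)
    (hL : ∀ u v, (Gq q).Adj u v → LinearIndependent F ![L u, L v]) :
    (∃ g : {u : Fin (q ^ 2) → Fin q // BalancedVec q u} → Fin (q' + 1),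
      ∀ u v, (Gq q).Adj u v → g u ≠ g v) ∧
    (Gq q).chromaticNumber ≤ (q' + 1 : ℕ) := by
  classical
  -- color by normalized vector, encoded as Option F
  let c : {u : Fin (q ^ 2) → Fin q // BalancedVec q u} → Option F := fun u => if L u 0 ≠ 0 then some (L u 1 / L u 0) else none
  have hcard : Fintype.card (Option F) = q' + 1 := by
    simp [Fintype.card_option, hF]
  let e : Option F ≃ Fin (q' + 1) := Fintype.equivFinOfCardEq hcard
  have key : ∀ u v, (Gq q).Adj u v → c u ≠ c v := by
    intro u v hadj hc
    have hli := hL u v hadj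
    rw [linearIndependent_fin2] at hli
    obtain ⟨hv1, hns⟩ := hli
    simp only [Matrix.cons_val_one, Matrix.head_cons, Matrix.cons_val_zero] at hv1 hns
    by_cases hu0 : L u 0 = 0
    · by_cases hv0 : L v 0 = 0
      · -- both first coords zero ⇒ proportional
        have hv1' : L v 1 ≠ 0 := by
          intro h
          apply hv1
          funext i
          fin_cases i <;> simp [hv0, h]
        apply hns (L u 1 / L v 1)
        funext i
        fin_cases i <;> simp [hu0, hv0] <;> field_simp
      · simp only [c, if_neg (not_not.mpr hu0), if_pos hv0] at hc
        exact (Option.some_ne_none _) hc.symm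
    · by_cases hv0 : L v 0 = 0
      · simp only [c, if_pos hu0, if_neg (not_not.mpr hv0)] at hc
        exact (Option.some_ne_none _) hc
      · simp only [c, if_pos hu0, if_pos hv0, Option.some_inj] at hc
        apply hns (L u 0 / L v 0)
        funext i
        fin_cases i
        · simp; field_simp
        · show L u 0 / L v 0 * L v 1 = L u 1
          field_simp at hc ⊢
          linear_combination -hc
  have hg : ∀ u v, (Gq q).Adj u v → e (c u) ≠ e (c v) := by
    intro u v hadj h
    exact key u v hadj (e.injective h)
  refine ⟨⟨fun u => e (c u), hg⟩, ?_⟩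
  have hcol : (Gq q).Colorable (q' + 1) :=
    ⟨SimpleGraph.Coloring.mk (fun u => e (c u)) (fun {u v} hadj => hg u v hadj)⟩
  exact hcol.chromaticNumber_le
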